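/- Let D ⊆ ℝᵈ be nonempty and C = {λ v : v ∈ conv(D), λ ≥ 0} its generated cone. If 0 lies in the relative interior of C, then for every x ∈ D there exist finitely many points x₁,…,x_m ∈ D and weights λ₁,…,λ_{m+1} ∈ (0,1] with λ₁ + ⋯ + λ_{m+1} = 1 such that 0 = Σⱼ₌₁^m λⱼ xⱼ + λ_{m+1} x. -/

import Mathlib

/-- If 0 lies in the relative interior of the cone generated by the convex hull of a
nonempty set `D`, every point of `D` appears with positive weight in a finite convex
combination of points of `D` summing to zero. -/
theorem stmt1 {d : ℕ} (D : Set (EuclideanSpace ℝ (Fin d))) (hD : D.Nonempty)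
    (C : Set (EuclideanSpace ℝ (Fin d)))
    (hC : C = {y | ∃ v ∈ convexHull ℝ D, ∃ l : ℝ, 0 ≤ l ∧ y = l • v})
    (h0 : (0 : EuclideanSpace ℝ (Fin d)) ∈ intrinsicInterior ℝ C) :
    ∀ x ∈ D, ∃ (m : ℕ) (xs : Fin m → EuclideanSpace ℝ (Fin d))
      (lam : Fin (m + 1) → ℝ),
      (∀ j, xs j ∈ D) ∧ (∀ j, lam j ∈ Set.Ioc (0 : ℝ) 1) ∧
      (∑ j, lam j = 1) ∧
      (0 : EuclideanSpace ℝ (Fin d)) =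
        (∑ j : Fin m, lam j.castSucc • xs j) + lam (Fin.last m) • x := by
  intro x hxD
  have hxC : x ∈ C := by
    rw [hC]; exact ⟨x, subset_convexHull ℝ D hxD, 1, zero_le_one, (one_smul _ _).symm⟩
  obtain ⟨v₀, hv₀⟩ := hD
  have h0C : (0 : EuclideanSpace ℝ (Fin d)) ∈ C := by
    rw [hC]; exact ⟨v₀, subset_convexHull ℝ D hv₀, 0, le_refl 0, (zero_smul _ _).symm⟩
  by_cases hx0 : x = 0
  · refine ⟨0, Fin.elim0, fun _ => 1, fun j => j.elim0, fun j => ⟨one_pos, le_refl 1⟩, ?_, ?_⟩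
    · simp
    · simp [hx0]
  -- find t < 0 with t • x ∈ C
  obtain ⟨t, ht, htC⟩ : ∃ t : ℝ, t < 0 ∧ t • x ∈ C := by
    rw [intrinsicInterior] at h0
    obtain ⟨y, hy, hy0⟩ := h0
    have hxspan : x ∈ affineSpan ℝ C := subset_affineSpan ℝ C hxC
    have h0span : (0 : EuclideanSpace ℝ (Fin d)) ∈ affineSpan ℝ C := subset_affineSpan ℝ C h0C
    have hmem : ∀ t : ℝ, t • x ∈ affineSpan ℝ C := by
      intro t
      have := AffineMap.lineMap_mem t h0span hxspan
      simpa [AffineMap.lineMap_apply] using this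
    set g : ℝ → affineSpan ℝ C := fun t => ⟨t • x, hmem t⟩ with hg
    have hgc : Continuous g := Continuous.subtype_mk (by continuity) _
    have hg0 : g 0 = y := by
      apply Subtype.ext; simp [hg, hy0]
    have hnh : g ⁻¹' (interior ((↑) ⁻¹' C)) ∈ nhds (0 : ℝ) := by
      apply hgc.continuousAt.preimage_mem_nhds
      rw [hg0]
      exact isOpen_interior.mem_nhds hy
    obtain ⟨ε, hε, hball⟩ := Metric.mem_nhds_iff.mp hnh
    refine ⟨-(ε/2), by linarith, ?_⟩
    have hb : (-(ε/2)) ∈ Metric.ball (0:ℝ) ε := by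
      rw [Metric.mem_ball, Real.dist_eq, sub_zero, abs_of_neg (by linarith : -(ε/2) < 0)]
      linarith
    have := interior_subset (hball hb)
    exact this
  rw [hC] at htC
  obtain ⟨v, hv, l, hl, hlv⟩ := htC
  have hlpos : 0 < l := by
    rcases hl.lt_or_eq with h | h
    · exact h
    · exfalso
      apply hx0
      have h1 : t • x = 0 := by rw [hlv, ← h, zero_smul]
      have := smul_eq_zero.mp h1
      rcases this with h2 | h2
      · exact absurd h2 (ne_of_lt ht)
      · exact h2
  rw [convexHull_eq] at hv
  obtain ⟨ι, s, w, z, hw0, hw1, hz, hcm⟩ := hv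
  have hvsum : ∑ i ∈ s, w i • z i = v := by
    rw [← Finset.centerMass_eq_of_sum_1 s z hw1]; exact hcm
  classical
  set s' : Finset ι := s.filter (fun i => 0 < w i) with hs'
  have hsub : s' ⊆ s := Finset.filter_subset _ _
  have hzero : ∀ i ∈ s, i ∉ s' → w i = 0 := by
    intro i hi hni
    have : ¬ 0 < w i := by
      intro h; exact hni (Finset.mem_filter.mpr ⟨hi, h⟩)
    exact le_antisymm (not_lt.mp this) (hw0 i hi)
  have hw1' : ∑ i ∈ s', w i = 1 := by
    rw [← hw1]
    apply Finset.sum_subset hsub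
    intro i hi hni; exact hzero i hi hni
  have hvsum' : ∑ i ∈ s', w i • z i = v := by
    rw [← hvsum]
    apply Finset.sum_subset hsub
    intro i hi hni; rw [hzero i hi hni, zero_smul]
  set S : ℝ := l - t with hS
  have hSpos : 0 < S := by simp [hS]; linarith
  set m : ℕ := s'.card with hm
  set e : {i // i ∈ s'} ≃ Fin m := s'.equivFin with he
  refine ⟨m, fun j => z (e.symm j : ι), Fin.snoc (fun j => l * w (e.symm j : ι) / S) ((-t)/S),
    ?_, ?_, ?_, ?_⟩
  · intro j
    exact hz _ (hsub (e.symm j).2)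
  · intro j
    refine Fin.lastCases ?_ ?_ j
    · simp only [Fin.snoc_last]
      constructor
      · exact div_pos (by linarith) hSpos
      · rw [div_le_one hSpos]; linarith
    · intro j
      simp only [Fin.snoc_castSucc]
      have hwpos : 0 < w (e.symm j : ι) := (Finset.mem_filter.mp (e.symm j).2).2
      have hwle : w (e.symm j : ι) ≤ 1 := by
        rw [← hw1']
        exact Finset.single_le_sum (fun i hi => le_of_lt (Finset.mem_filter.mp hi).2) (e.symm j).2
      constructor
      · positivity
      · rw [div_le_one hSpos]
        nlinarith
  · rw [Fin.sum_univ_castSucc]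
    simp only [Fin.snoc_castSucc, Fin.snoc_last]
    have : ∑ j : Fin m, l * w (e.symm j : ι) / S = (l / S) * ∑ j : Fin m, w (e.symm j : ι) := by
      rw [Finset.mul_sum]; congr 1; ext j; ring
    rw [this]
    have hre : ∑ j : Fin m, w (e.symm j : ι) = ∑ i ∈ s', w i := by
      rw [Equiv.sum_comp e.symm (fun i : {i // i ∈ s'} => w (i : ι))]
      exact Finset.sum_coe_sort s' w
    rw [hre, hw1', mul_one]
    rw [← add_div]
    rw [div_eq_one_iff_eq (ne_of_gt hSpos), hS]
    ring
  · simp only [Fin.snoc_castSucc, Fin.snoc_last]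
    have key : ∑ j : Fin m, (l * w (e.symm j : ι) / S) • z (e.symm j : ι)
        = (l / S) • v := by
      rw [← hvsum']
      rw [Finset.smul_sum]
      rw [Equiv.sum_comp e.symm (fun i : {i // i ∈ s'} => (l * w (i : ι) / S) • z (i : ι))]
      rw [← Finset.sum_coe_sort s' (fun i => (l / S) • (w i • z i))]
      refine Finset.sum_congr rfl fun i _ => ?_
      rw [smul_smul]
      congr 1; ring
    rw [key]
    have hlv' : l • v = t • x := hlv.symm
    have : (l / S) • v = (t / S) • x := by
      rw [div_eq_mul_inv, div_eq_mul_inv, mul_comm l, mul_comm t, ← smul_smul, ← smul_smul, hlv']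
    rw [this, ← add_smul]
    have : t / S + -t / S = 0 := by ring
    rw [this, zero_smul]
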